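/- arXiv:1510.00510 — 8 statements merged into one kernel-verified Lean document; each statement's English description precedes it below -/
import Mathlib

section
/- For any finite set A ⊆ ℕⁿ there exists γ ∈ (ℕ₊)ⁿ (all coordinates strictly positive natural numbers) such that for every α ∈ A and every β ∈ ℕⁿ with α <lex β one has α·γ < β·γ, where · denotes the standard dot product ∑ᵢ αᵢγᵢ. -/
/-- `α <lex β`: at the smallest index `i` with `α i ≠ β i` one has `α i < β i`. -/
def LexLt {n : ℕ} (α β : Fin n → ℕ) : Prop :=
  ∃ i : Fin n, (∀ j : Fin n, j < i → α j = β j) ∧ α i < β i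

lemma geom_aux (B : ℕ) : ∀ m : ℕ, B * ∑ t ∈ Finset.range m, (B+1)^t + 1 = (B+1)^m := by
  intro m
  induction m with
  | zero => simp
  | succ m ih =>
    rw [Finset.sum_range_succ, pow_succ]
    nlinarith [ih]

lemma key_aux (n B : ℕ) (i : Fin n) :
    ∑ j ∈ Finset.Ioi i, B * (B+1)^(n-1-j.val) < (B+1)^(n-1-i.val) := by
  have heq : ∑ j ∈ Finset.Ioi i, B * (B+1)^(n-1-j.val)
      = ∑ t ∈ Finset.range (n-1-i.val), B * (B+1)^t := by
    apply Finset.sum_nbij' (i := fun j => n-1-j.val)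
      (j := fun t => (⟨n-1-t, by have := i.pos; omega⟩ : Fin n))
    · intro a ha
      simp only [Finset.mem_Ioi, Fin.lt_def] at ha
      simp only [Finset.mem_range]
      have := a.isLt
      omega
    · intro t ht
      simp only [Finset.mem_range] at ht
      simp only [Finset.mem_Ioi, Fin.lt_def, Fin.val_mk]
      omega
    · intro a ha
      simp only [Finset.mem_Ioi, Fin.lt_def] at ha
      have := a.isLt
      ext
      simp
      omega
    · intro t ht
      simp only [Finset.mem_range] at ht
      simp
      omega
    · intro a ha
      rfl
  rw [heq, ← Finset.mul_sum]
  have := geom_aux B (n-1-i.val)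
  omega

theorem stmt0 (n : ℕ) (A : Finset (Fin n → ℕ)) :
    ∃ γ : Fin n → ℕ, (∀ i, 0 < γ i) ∧
      ∀ α ∈ A, ∀ β : Fin n → ℕ, LexLt α β →
        ∑ i, α i * γ i < ∑ i, β i * γ i := by
  set B := A.sup (fun α => Finset.univ.sup α) with hB
  have hbound : ∀ α ∈ A, ∀ i, α i ≤ B := by
    intro α hα i
    exact le_trans (Finset.le_sup (Finset.mem_univ i)) (Finset.le_sup hα)
  refine ⟨fun i => (B+1)^(n-1-i.val), fun i => pow_pos (Nat.succ_pos B) _, ?_⟩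
  intro α hα β ⟨i, hpre, hi⟩
  have huniv : ∀ f : Fin n → ℕ, ∑ j, f j =
      ∑ j ∈ Finset.Iio i, f j + (f i + ∑ j ∈ Finset.Ioi i, f j) := by
    intro f
    rw [Finset.add_sum_Ioi_eq_sum_Ici, ← Finset.sum_union]
    · congr 1
      ext j
      simpa using lt_or_ge j i
    · rw [Finset.disjoint_left]
      intro a ha hb
      simp only [Finset.mem_Iio] at ha
      simp only [Finset.mem_Ici] at hb
      exact absurd hb (not_le.mpr ha)
  rw [huniv (fun j => α j * (B+1)^(n-1-j.val)), huniv (fun j => β j * (B+1)^(n-1-j.val))]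
  have hpresum : ∑ j ∈ Finset.Iio i, α j * (B+1)^(n-1-j.val)
      = ∑ j ∈ Finset.Iio i, β j * (B+1)^(n-1-j.val) := by
    apply Finset.sum_congr rfl
    intro j hj
    rw [hpre j (Finset.mem_Iio.mp hj)]
  rw [hpresum]
  have htail : ∑ j ∈ Finset.Ioi i, α j * (B+1)^(n-1-j.val) < (B+1)^(n-1-i.val) := by
    calc ∑ j ∈ Finset.Ioi i, α j * (B+1)^(n-1-j.val)
        ≤ ∑ j ∈ Finset.Ioi i, B * (B+1)^(n-1-j.val) :=
          Finset.sum_le_sum (fun j _ => Nat.mul_le_mul_right _ (hbound α hα j))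
      _ < (B+1)^(n-1-i.val) := key_aux n B i
  have hβi : (α i + 1) * (B+1)^(n-1-i.val) ≤ β i * (B+1)^(n-1-i.val) :=
    Nat.mul_le_mul_right _ hi
  have : 0 ≤ ∑ j ∈ Finset.Ioi i, β j * (B+1)^(n-1-j.val) := Nat.zero_le _
  nlinarith [htail, hβi]
end

section
/- Let Γ be an additive subsemigroup of ℕⁿ × ℕ, for k ≥ 1 set Γ_k := { α ∈ ℕⁿ : (α,k) ∈ Γ } and Δ_k := (1/k)·Conv(Γ_k), and let Δ be the closed convex hull in ℝⁿ of ⋃_{k≥1} Δ_k. If K is a compact subset of the interior of Δ, then there exists an integer k₀ ≥ 1 such that K ⊆ Δ_k for every positive integer multiple k of k₀. -/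
open Pointwise

lemma stmt6_aux_interior_closure {E : Type*} [NormedAddCommGroup E] [NormedSpace ℝ E]
    [FiniteDimensional ℝ E] {s : Set E} (hs : Convex ℝ s) :
    interior (closure s) ⊆ interior s := by
  rcases Set.eq_empty_or_nonempty (interior s) with h | ⟨y, hy⟩
  · intro u hu
    exfalso
    have hcl : Convex ℝ (closure s) := hs.closure
    have h2 : (interior (closure s)).Nonempty := ⟨u, hu⟩
    rw [hcl.interior_nonempty_iff_affineSpan_eq_top] at h2
    have hsub : closure s ⊆ (affineSpan ℝ s : Set E) :=
      closure_minimal (subset_affineSpan ℝ s) (affineSpan ℝ s).closed_of_finiteDimensional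
    have h3 : affineSpan ℝ (closure s) ≤ affineSpan ℝ s := affineSpan_le.mpr hsub
    rw [h2] at h3
    have h4 : affineSpan ℝ s = ⊤ := top_le_iff.mp h3
    rw [← hs.interior_nonempty_iff_affineSpan_eq_top] at h4
    rw [h] at h4
    exact Set.not_nonempty_empty h4
  · intro u hu
    have hU : IsOpen (interior (closure s)) := isOpen_interior
    have hcont : Continuous fun t : ℝ => u + t • (u - y) := by continuity
    have h0 : (fun t : ℝ => u + t • (u - y)) 0 ∈ interior (closure s) := by simpa using hu
    obtain ⟨δ, hδ, hball⟩ := Metric.isOpen_iff.mp (hU.preimage hcont) 0 h0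
    set t := δ / 2 with ht
    have htpos : 0 < t := by positivity
    have hz : u + t • (u - y) ∈ interior (closure s) := by
      apply hball
      simp only [Metric.mem_ball, Real.dist_eq, sub_zero]
      rw [abs_of_pos htpos]
      linarith
    have hzcl : u + t • (u - y) ∈ closure s := interior_subset hz
    have h1t : (0:ℝ) < 1 + t := by linarith
    have ha : (0:ℝ) < t / (1 + t) := by positivity
    have hb : (0:ℝ) ≤ 1 / (1 + t) := by positivity
    have hab : t / (1 + t) + 1 / (1 + t) = 1 := by field_simp; ring
    have hmem := hs.combo_interior_closure_mem_interior hy hzcl ha hb hab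
    have key : (t / (1 + t)) • y + (1 / (1 + t)) • (u + t • (u - y)) = u := by
      match_scalars <;> (field_simp; try ring)
    rwa [key] at hmem

lemma stmt6_aux_finite (n : ℕ) (S : Set (Fin n → ℝ)) (x : Fin n → ℝ)
    (hx : x ∈ interior (convexHull ℝ S)) :
    ∃ F : Set (Fin n → ℝ), F.Finite ∧ F ⊆ S ∧ x ∈ interior (convexHull ℝ F) := by
  obtain ⟨ε, hε, hball⟩ := Metric.isOpen_iff.mp isOpen_interior x hx
  set ε' := ε / 2 with hε'
  have hε'pos : 0 < ε' := by positivity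
  have hcb : Metric.closedBall x ε' ⊆ convexHull ℝ S :=
    (Metric.closedBall_subset_ball (by linarith)).trans (hball.trans interior_subset)
  set V : Set (Fin n → ℝ) := Set.pi Set.univ (fun i => {x i - ε', x i + ε'}) with hV
  have hVfin : V.Finite := Set.Finite.pi fun i => (Set.finite_singleton _).insert _
  have hcube : Metric.closedBall x ε' = convexHull ℝ V := by
    rw [closedBall_pi _ hε'pos.le, hV, convexHull_pi]
    exact Set.pi_congr rfl fun i _ => by
      rw [Real.closedBall_eq_Icc, convexHull_pair, segment_eq_Icc (by linarith)]
  have hVcb : V ⊆ Metric.closedBall x ε' := by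
    rw [hcube]; exact subset_convexHull ℝ V
  have hVS : ∀ v ∈ V, ∃ tf : Finset (Fin n → ℝ),
      (tf : Set (Fin n → ℝ)) ⊆ S ∧ v ∈ convexHull ℝ (tf : Set (Fin n → ℝ)) := by
    intro v hv
    have hvS : v ∈ convexHull ℝ S := hcb (hVcb hv)
    rw [convexHull_eq_union_convexHull_finite_subsets] at hvS
    simpa using hvS
  choose! f hf1 hf2 using hVS
  refine ⟨⋃ v ∈ V, (f v : Set (Fin n → ℝ)), hVfin.biUnion fun v _ => (f v).finite_toSet,
    Set.iUnion₂_subset fun v hv => hf1 v hv, ?_⟩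
  rw [mem_interior_iff_mem_nhds]
  refine Filter.mem_of_superset (Metric.closedBall_mem_nhds x hε'pos) ?_
  rw [hcube]
  refine convexHull_min (fun v hv => ?_) (convex_convexHull ℝ _)
  exact convexHull_mono (Set.subset_biUnion_of_mem hv) (hf2 v hv)
theorem stmt6 (n : ℕ) (Γ : Set ((Fin n → ℕ) × ℕ))
    (hΓ : ∀ x ∈ Γ, ∀ y ∈ Γ, x + y ∈ Γ)
    (Γk : ℕ → Set (Fin n → ℝ))
    (hΓk : ∀ k, Γk k = {x | ∃ α : Fin n → ℕ, (α, k) ∈ Γ ∧ x = fun i => (α i : ℝ)})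
    (Δk : ℕ → Set (Fin n → ℝ))
    (hΔk : ∀ k, Δk k = (k : ℝ)⁻¹ • convexHull ℝ (Γk k))
    (Δ : Set (Fin n → ℝ))
    (hΔ : Δ = closure (convexHull ℝ (⋃ k ≥ 1, Δk k)))
    (K : Set (Fin n → ℝ)) (hK : IsCompact K) (hKΔ : K ⊆ interior Δ) :
    ∃ k₀ : ℕ, 1 ≤ k₀ ∧ ∀ k : ℕ, 0 < k → k₀ ∣ k → K ⊆ Δk k := by
  classical
  set S : Set (Fin n → ℝ) := ⋃ k ≥ 1, Δk k with hS
  -- Step 0 : basic algebraic lemmas about the semigroup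
  have hadd : ∀ a b : ℕ, Γk a + Γk b ⊆ Γk (a + b) := by
    intro a b z hz
    obtain ⟨u, hu, v, hv, rfl⟩ := hz
    rw [hΓk] at hu hv ⊢
    obtain ⟨α, hα, rfl⟩ := hu
    obtain ⟨β, hβ, rfl⟩ := hv
    refine ⟨α + β, ?_, ?_⟩
    · have := hΓ _ hα _ hβ
      simpa [Prod.mk_add_mk] using this
    · funext i
      simp [Pi.add_apply]
  have hsum : ∀ a b : ℕ, ∀ z ∈ convexHull ℝ (Γk a) + convexHull ℝ (Γk b),
      z ∈ convexHull ℝ (Γk (a + b)) := by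
    intro a b z hz
    rw [← convexHull_add] at hz
    exact convexHull_mono (hadd a b) hz
  have hmul : ∀ m : ℕ, 1 ≤ m → ∀ l : ℕ, ∀ x ∈ convexHull ℝ (Γk l),
      (m : ℝ) • x ∈ convexHull ℝ (Γk (m * l)) := by
    intro m hm
    induction m, hm using Nat.le_induction with
    | base => intro l x hx; simpa using hx
    | succ m hm ih =>
      intro l x hx
      have h1 : (m : ℝ) • x ∈ convexHull ℝ (Γk (m * l)) := ih l x hx
      have h2 := hsum (m * l) l _ (Set.add_mem_add h1 hx)
      have he : (m + 1) * l = m * l + l := by ring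
      have he2 : ((m + 1 : ℕ) : ℝ) • x = (m : ℝ) • x + x := by
        push_cast
        rw [add_smul, one_smul]
      rw [he, he2]
      exact h2
  have hmono : ∀ l : ℕ, 1 ≤ l → ∀ m : ℕ, 1 ≤ m → Δk l ⊆ Δk (m * l) := by
    intro l hl m hm x hx
    rw [hΔk] at hx ⊢
    obtain ⟨y, hy, rfl⟩ := hx
    refine ⟨(m : ℝ) • y, hmul m hm l y hy, ?_⟩
    show ((m * l : ℕ) : ℝ)⁻¹ • ((m : ℝ) • y) = (l : ℝ)⁻¹ • y
    rw [smul_smul]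
    congr 1
    have hl' : (l : ℝ) ≠ 0 := Nat.cast_ne_zero.mpr (by omega)
    have hm' : (m : ℝ) ≠ 0 := Nat.cast_ne_zero.mpr (by omega)
    push_cast
    field_simp
  have hΔconv : ∀ k : ℕ, Convex ℝ (Δk k) := by
    intro k
    rw [hΔk]
    exact (convex_convexHull ℝ _).smul _
  -- Step 1 : K ⊆ interior (convexHull ℝ S)
  have hKC : K ⊆ interior (convexHull ℝ S) := by
    intro x hx
    have := hKΔ hx
    rw [hΔ] at this
    exact stmt6_aux_interior_closure (convex_convexHull ℝ S) this
  -- Step 2 : compactness gives a finite G ⊆ S with K ⊆ convexHull ℝ G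
  have hchoice : ∀ x : K, ∃ F : Set (Fin n → ℝ),
      F.Finite ∧ F ⊆ S ∧ (x : Fin n → ℝ) ∈ interior (convexHull ℝ F) :=
    fun x => stmt6_aux_finite n S x (hKC x.2)
  choose F hFfin hFS hFx using hchoice
  obtain ⟨t, ht⟩ := hK.elim_finite_subcover
    (fun x : K => interior (convexHull ℝ (F x)))
    (fun x => isOpen_interior)
    (fun x hx => Set.mem_iUnion.mpr ⟨⟨x, hx⟩, hFx ⟨x, hx⟩⟩)
  set G : Set (Fin n → ℝ) := ⋃ x ∈ t, F x with hG
  have hGfin : G.Finite := t.finite_toSet.biUnion fun x _ => hFfin x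
  have hGS : G ⊆ S := Set.iUnion₂_subset fun x _ => hFS x
  have hKG : K ⊆ convexHull ℝ G := by
    intro z hz
    obtain ⟨x, hxt, hzx⟩ := Set.mem_iUnion₂.mp (ht hz)
    exact convexHull_mono (Set.subset_biUnion_of_mem hxt) (interior_subset hzx)
  -- Step 3 : levels for points of G
  have hlev : ∀ p ∈ G, ∃ k : ℕ, 1 ≤ k ∧ p ∈ Δk k := by
    intro p hp
    have := hGS hp
    simpa [hS] using this
  choose! κ hκ1 hκmem using hlev
  refine ⟨∏ p ∈ hGfin.toFinset, κ p, ?_, ?_⟩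
  · refine Nat.one_le_iff_ne_zero.mpr (Finset.prod_ne_zero_iff.mpr fun p hp => ?_)
    have := hκ1 p (hGfin.mem_toFinset.mp hp)
    omega
  · intro k hk hdvd z hz
    have hsub : convexHull ℝ G ⊆ Δk k := by
      refine convexHull_min (fun p hp => ?_) (hΔconv k)
      have hpd : κ p ∣ k := dvd_trans (Finset.dvd_prod_of_mem κ (hGfin.mem_toFinset.mpr hp)) hdvd
      obtain ⟨m, hm⟩ := hpd
      have hm1 : 1 ≤ m := by
        have hκp := hκ1 p hp
        rcases Nat.eq_zero_or_pos m with h | h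
        · subst h; omega
        · omega
      have hmem := hmono (κ p) (hκ1 p hp) m hm1 (hκmem p hp)
      rwa [Nat.mul_comm, ← hm] at hmem
    exact hsub (hKG hz)
end

section
/- Let Γ be an additive subsemigroup of ℕⁿ × ℕ, for k ≥ 1 set Γ_k := { α ∈ ℕⁿ : (α,k) ∈ Γ } and Δ_k := (1/k)·Conv(Γ_k), and let Δ_k^ess denote the interior of Δ_k as a subset of ℝ₊ⁿ := { x ∈ ℝⁿ : xᵢ ≥ 0 for all i } with its induced (subspace) topology. Set Δ^ess := ⋃_{k≥1} Δ_{k!}^ess. If K is a compact subset of Δ^ess, then there exists an integer k₀ ≥ 1 such that K ⊆ Δ_k^ess for every positive integer multiple k of k₀. -/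
open Pointwise

/-- The nonnegative orthant `ℝ₊ⁿ`. -/
def Rplus (n : ℕ) : Set (Fin n → ℝ) := {x | ∀ i, 0 ≤ x i}

/-- The essential interior of `T`: the interior of `T ∩ ℝ₊ⁿ` as a subset of `ℝ₊ⁿ`
with its induced (subspace) topology, viewed again as a subset of `ℝⁿ`. -/
def essInterior {n : ℕ} (T : Set (Fin n → ℝ)) : Set (Fin n → ℝ) :=
  (Subtype.val : Rplus n → (Fin n → ℝ)) ''
    interior ((Subtype.val : Rplus n → (Fin n → ℝ)) ⁻¹' T)

theorem stmt7 (n : ℕ) (Γ : Set ((Fin n → ℕ) × ℕ))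
    (hΓ : ∀ x ∈ Γ, ∀ y ∈ Γ, x + y ∈ Γ)
    (Γk : ℕ → Set (Fin n → ℝ))
    (hΓk : ∀ k, Γk k = {x | ∃ α : Fin n → ℕ, (α, k) ∈ Γ ∧ x = fun i => (α i : ℝ)})
    (Δk : ℕ → Set (Fin n → ℝ))
    (hΔk : ∀ k, Δk k = (k : ℝ)⁻¹ • convexHull ℝ (Γk k))
    (Δess : Set (Fin n → ℝ))
    (hΔess : Δess = ⋃ k ≥ 1, essInterior (Δk (Nat.factorial k)))
    (K : Set (Fin n → ℝ)) (hK : IsCompact K) (hKΔ : K ⊆ Δess) :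
    ∃ k₀ : ℕ, 1 ≤ k₀ ∧ ∀ k : ℕ, 0 < k → k₀ ∣ k → K ⊆ essInterior (Δk k) := by
  -- Γ is closed under positive natural scalar multiplication
  have hΓs : ∀ m : ℕ, 1 ≤ m → ∀ p ∈ Γ, m • p ∈ Γ := by
    intro m hm
    induction m, hm using Nat.le_induction with
    | base => intro p hp; simpa using hp
    | succ m hm ih =>
      intro p hp
      rw [succ_nsmul]
      exact hΓ _ (ih p hp) _ hp
  -- scaling Γk
  have hsmul : ∀ a m : ℕ, 1 ≤ m → (m : ℝ) • Γk a ⊆ Γk (m * a) := by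
    intro a m hm x hx
    obtain ⟨y, hy, rfl⟩ := hx
    rw [hΓk] at hy ⊢
    obtain ⟨α, hα, rfl⟩ := hy
    refine ⟨m • α, ?_, ?_⟩
    · have := hΓs m hm (α, a) hα
      simpa [Prod.smul_mk, smul_eq_mul] using this
    · funext i
      simp only [Pi.smul_apply, smul_eq_mul]
      push_cast
      ring
  -- monotonicity of Δk along divisibility
  have hΔ : ∀ a k : ℕ, 1 ≤ a → 0 < k → a ∣ k → Δk a ⊆ Δk k := by
    intro a k ha hk hak x hx
    obtain ⟨m, rfl⟩ := hak
    have hm : 1 ≤ m := by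
      rcases Nat.eq_zero_or_pos m with h | h
      · simp [h] at hk
      · exact h
    have ha' : (a : ℝ) ≠ 0 := by positivity
    have hk' : ((a * m : ℕ) : ℝ) ≠ 0 := by
      push_cast; positivity
    rw [hΔk] at hx ⊢
    rw [Set.mem_inv_smul_set_iff₀ ha'] at hx
    rw [Set.mem_inv_smul_set_iff₀ hk']
    have h1 : (m : ℝ) • ((a : ℝ) • x) ∈ (m : ℝ) • convexHull ℝ (Γk a) :=
      Set.smul_mem_smul_set hx
    have h2 : (m : ℝ) • convexHull ℝ (Γk a) ⊆ convexHull ℝ (Γk (m * a)) := by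
      rw [← convexHull_smul]
      exact convexHull_mono (hsmul a m hm)
    have h3 := h2 h1
    have heq : ((a * m : ℕ) : ℝ) • x = (m : ℝ) • ((a : ℝ) • x) := by
      rw [smul_smul]; push_cast; ring_nf
    rw [heq, mul_comm a m]
    exact h3
  -- essInterior is monotone
  have hess : ∀ S T : Set (Fin n → ℝ), S ⊆ T → essInterior S ⊆ essInterior T :=
    fun S T h => Set.image_mono (interior_mono (Set.preimage_mono h))
  -- essInterior lands in Rplus
  have hessR : ∀ T : Set (Fin n → ℝ), essInterior T ⊆ Rplus n := by
    intro T x hx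
    obtain ⟨y, _, rfl⟩ := hx
    exact y.2
  -- Rplus is closed
  have hRclosed : IsClosed (Rplus n) := by
    have : Rplus n = ⋂ i, {x : Fin n → ℝ | 0 ≤ x i} := by
      ext x; simp [Rplus, Set.mem_iInter]
    rw [this]
    exact isClosed_iInter fun i => isClosed_le continuous_const (continuous_apply i)
  -- K lies in Rplus
  have hKR : K ⊆ Rplus n := by
    intro x hx
    have := hKΔ hx
    rw [hΔess] at this
    simp only [Set.mem_iUnion] at this
    obtain ⟨k, _, hk2⟩ := this
    exact hessR _ hk2
  -- lift K to the subtype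
  have hK' : IsCompact ((Subtype.val : Rplus n → (Fin n → ℝ)) ⁻¹' K) :=
    hRclosed.isClosedEmbedding_subtypeVal.isCompact_preimage hK
  set U : ℕ → Set (Rplus n) :=
    fun k => interior ((Subtype.val : Rplus n → (Fin n → ℝ)) ⁻¹' Δk (Nat.factorial k)) with hU
  have hcov : (Subtype.val : Rplus n → (Fin n → ℝ)) ⁻¹' K ⊆ ⋃ k, U k := by
    rintro ⟨x, hx⟩ hxK
    have := hKΔ hxK
    rw [hΔess] at this
    simp only [Set.mem_iUnion] at this
    obtain ⟨k, _, hk2⟩ := this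
    obtain ⟨y, hy, hxy⟩ := hk2
    refine Set.mem_iUnion.2 ⟨k, ?_⟩
    have hyx : y = ⟨x, hx⟩ := Subtype.ext hxy
    exact hU ▸ (hyx ▸ hy)
  obtain ⟨F, hF⟩ := hK'.elim_finite_subcover U (fun k => isOpen_interior) hcov
  refine ⟨∏ k ∈ F, Nat.factorial k, ?_, ?_⟩
  · exact Nat.one_le_iff_ne_zero.2 (Finset.prod_ne_zero_iff.2 fun k _ => (Nat.factorial_pos k).ne')
  · intro k hkpos hdvd x hxK
    have hxR : x ∈ Rplus n := hKR hxK
    have hmem : (⟨x, hxR⟩ : Rplus n) ∈ ⋃ i ∈ F, U i := hF hxK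
    simp only [Set.mem_iUnion] at hmem
    obtain ⟨i, hiF, hUi⟩ := hmem
    have hdvd' : Nat.factorial i ∣ k :=
      dvd_trans (Finset.dvd_prod_of_mem Nat.factorial hiF) hdvd
    have hsub : Δk (Nat.factorial i) ⊆ Δk k :=
      hΔ (Nat.factorial i) k (Nat.one_le_iff_ne_zero.2 (Nat.factorial_pos i).ne') hkpos hdvd'
    exact hess _ _ hsub ⟨⟨x, hxR⟩, hUi, rfl⟩
end

section
/- Let Γ be an additive subsemigroup of ℕⁿ × ℕ, for k ≥ 1 set Γ_k := { α ∈ ℕⁿ : (α,k) ∈ Γ } and Δ_k := (1/k)·Conv(Γ_k), and let Δ_k^ess denote the interior of Δ_k as a subset of ℝ₊ⁿ := { x ∈ ℝⁿ : xᵢ ≥ 0 for all i } with its induced topology. Then Δ^ess := ⋃_{k≥1} Δ_{k!}^ess is a convex subset of ℝⁿ which is open in the subspace topology of ℝ₊ⁿ. -/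
open Pointwise

lemma mem_essInterior_iff {n : ℕ} (T : Set (Fin n → ℝ)) (z : Fin n → ℝ) :
    z ∈ essInterior T ↔ z ∈ Rplus n ∧ ∃ ε > 0, ∀ w, w ∈ Rplus n → dist w z < ε → w ∈ T := by
  constructor
  · rintro ⟨zs, hzs, rfl⟩
    refine ⟨zs.2, ?_⟩
    rw [mem_interior_iff_mem_nhds, Metric.mem_nhds_iff] at hzs
    obtain ⟨ε, hε, hball⟩ := hzs
    exact ⟨ε, hε, fun w hw hd => hball (show (⟨w, hw⟩ : Rplus n) ∈ Metric.ball zs ε by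
      simpa [Metric.mem_ball, Subtype.dist_eq] using hd)⟩
  · rintro ⟨hz, ε, hε, h⟩
    refine ⟨⟨z, hz⟩, ?_, rfl⟩
    rw [mem_interior_iff_mem_nhds, Metric.mem_nhds_iff]
    exact ⟨ε, hε, fun w hw => h w w.2 (by simpa [Metric.mem_ball, Subtype.dist_eq] using hw)⟩

lemma essInterior_mono {n : ℕ} {S T : Set (Fin n → ℝ)} (h : S ⊆ T) :
    essInterior S ⊆ essInterior T :=
  Set.image_mono (interior_mono (Set.preimage_mono h))

noncomputable def uval (t s xi yi wi : ℝ) : ℝ :=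
  if xi + (wi - (t * xi + s * yi)) < 0 then 0
  else if yi + (wi - (t * xi + s * yi)) < 0 then wi / t
  else xi + (wi - (t * xi + s * yi))

noncomputable def vval (t s xi yi wi : ℝ) : ℝ := (wi - t * uval t s xi yi wi) / s

lemma vval_eq (t s xi yi wi : ℝ) (hs : s ≠ 0) :
    wi = t * uval t s xi yi wi + s * vval t s xi yi wi := by
  rw [vval]; field_simp; ring

lemma coordLem (t s xi yi wi : ℝ) (ht : 0 < t) (hs : 0 < s) (hts : t + s = 1)
    (hxi : 0 ≤ xi) (hyi : 0 ≤ yi) (hwi : 0 ≤ wi) :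
    0 ≤ uval t s xi yi wi ∧ 0 ≤ vval t s xi yi wi ∧
      |uval t s xi yi wi - xi| ≤ 2 * |wi - (t * xi + s * yi)| / min t s ∧
      |vval t s xi yi wi - yi| ≤ 2 * |wi - (t * xi + s * yi)| / min t s := by
  set d := wi - (t * xi + s * yi) with hd
  have hD1 : -|d| ≤ d := neg_abs_le _
  have hD2 : d ≤ |d| := le_abs_self _
  have hD0 : 0 ≤ |d| := abs_nonneg _
  have hm : 0 < min t s := lt_min ht hs
  have hm1 : min t s ≤ 1 := le_trans (min_le_left _ _) (by linarith)
  have hmt : min t s ≤ t := min_le_left _ _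
  have hms : min t s ≤ s := min_le_right _ _
  by_cases h1 : xi + d < 0
  · have hu : uval t s xi yi wi = 0 := by rw [uval]; simp [← hd, h1]
    have hv : vval t s xi yi wi = wi / s := by rw [vval, hu]; ring
    have hxd : xi ≤ |d| := by nlinarith
    refine ⟨le_of_eq hu.symm, by rw [hv]; positivity, ?_, ?_⟩
    · rw [hu, abs_sub_comm, sub_zero, abs_of_nonneg hxi, le_div_iff₀ hm]
      nlinarith
    · have hveq : vval t s xi yi wi - yi = (t * xi + d) / s := by
        rw [hv, hd]; field_simp; ring
      rw [hveq, abs_div, abs_of_pos hs]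
      have hnum : |t * xi + d| ≤ 2 * |d| := by
        rw [abs_le]; constructor <;> nlinarith
      calc |t * xi + d| / s ≤ 2 * |d| / s := by gcongr
        _ ≤ 2 * |d| / min t s := by gcongr
  · push_neg at h1
    by_cases h2 : yi + d < 0
    · have hu : uval t s xi yi wi = wi / t := by rw [uval]; simp [← hd, not_lt.mpr h1, h2]
      have hv : vval t s xi yi wi = 0 := by rw [vval, hu]; field_simp; ring
      have hyd : yi ≤ |d| := by nlinarith
      refine ⟨by rw [hu]; positivity, le_of_eq hv.symm, ?_, ?_⟩
      · have hueq : uval t s xi yi wi - xi = (s * yi + d) / t := by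
          rw [hu, hd]; field_simp; ring
        rw [hueq, abs_div, abs_of_pos ht]
        have hnum : |s * yi + d| ≤ 2 * |d| := by
          rw [abs_le]; constructor <;> nlinarith
        calc |s * yi + d| / t ≤ 2 * |d| / t := by gcongr
          _ ≤ 2 * |d| / min t s := by gcongr
      · rw [hv, abs_sub_comm, sub_zero, abs_of_nonneg hyi, le_div_iff₀ hm]
        nlinarith
    · push_neg at h2
      have hu : uval t s xi yi wi = xi + d := by
        rw [uval]; simp [← hd, not_lt.mpr h1, not_lt.mpr h2]
      have hv : vval t s xi yi wi = yi + d := by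
        rw [vval, hu, hd]; field_simp
        linear_combination (t * xi + s * yi - wi) * hts
      refine ⟨by rw [hu]; exact h1, by rw [hv]; exact h2, ?_, ?_⟩
      · rw [hu, add_sub_cancel_left, le_div_iff₀ hm]; nlinarith
      · rw [hv, add_sub_cancel_left, le_div_iff₀ hm]; nlinarith

lemma convex_essInterior {n : ℕ} {T : Set (Fin n → ℝ)} (hT : Convex ℝ T) :
    Convex ℝ (essInterior T) := by
  intro x hx y hy t s ht hs hts
  rcases ht.eq_or_lt with rfl | ht'
  · simpa [(by linarith : s = 1)] using hy
  rcases hs.eq_or_lt with rfl | hs'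
  · simpa [(by linarith : t = 1)] using hx
  rw [mem_essInterior_iff] at hx hy ⊢
  obtain ⟨hxP, εx, hεx, hxT⟩ := hx
  obtain ⟨hyP, εy, hεy, hyT⟩ := hy
  have hm : 0 < min t s := lt_min ht' hs'
  have hε' : 0 < min εx εy := lt_min hεx hεy
  refine ⟨fun i => add_nonneg (mul_nonneg ht (hxP i)) (mul_nonneg hs (hyP i)),
    min t s * min εx εy / 2, by positivity, fun w hw hd => ?_⟩
  have hzi : ∀ i, (t • x + s • y) i = t * x i + s * y i := fun i => rfl
  set u : Fin n → ℝ := fun i => uval t s (x i) (y i) (w i) with hudef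
  set v : Fin n → ℝ := fun i => vval t s (x i) (y i) (w i) with hvdef
  have key : ∀ i, 0 ≤ u i ∧ 0 ≤ v i ∧
      |u i - x i| ≤ 2 * |w i - (t * x i + s * y i)| / min t s ∧
      |v i - y i| ≤ 2 * |w i - (t * x i + s * y i)| / min t s :=
    fun i => coordLem t s (x i) (y i) (w i) ht' hs' hts (hxP i) (hyP i) (hw i)
  have hdi : ∀ i, |w i - (t * x i + s * y i)| ≤ dist w (t • x + s • y) := fun i => by
    have := dist_le_pi_dist w (t • x + s • y) i
    rwa [Real.dist_eq, hzi] at this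
  have hbound : 2 * dist w (t • x + s • y) / min t s < min εx εy := by
    rw [div_lt_iff₀ hm]
    calc 2 * dist w (t • x + s • y) < 2 * (min t s * min εx εy / 2) := by linarith
      _ = min εx εy * min t s := by ring
  have hcoord : ∀ (a b : Fin n → ℝ) (ε : ℝ), 0 < ε →
      (∀ i, |a i - b i| ≤ 2 * |w i - (t * x i + s * y i)| / min t s) →
      2 * dist w (t • x + s • y) / min t s < ε → dist a b < ε := by
    intro a b ε hε hab hlt
    rw [dist_pi_lt_iff hε]
    intro i
    rw [Real.dist_eq]
    calc |a i - b i| ≤ 2 * |w i - (t * x i + s * y i)| / min t s := hab i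
      _ ≤ 2 * dist w (t • x + s • y) / min t s := by gcongr; exact hdi i
      _ < ε := hlt
  have hdu : dist u x < εx := hcoord u x εx hεx (fun i => (key i).2.2.1)
    (lt_of_lt_of_le hbound (min_le_left _ _))
  have hdv : dist v y < εy := hcoord v y εy hεy (fun i => (key i).2.2.2)
    (lt_of_lt_of_le hbound (min_le_right _ _))
  have huT : u ∈ T := hxT u (fun i => (key i).1) hdu
  have hvT : v ∈ T := hyT v (fun i => (key i).2.1) hdv
  have hweq : w = t • u + s • v := by
    funext i
    exact vval_eq t s (x i) (y i) (w i) (ne_of_gt hs')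
  rw [hweq]
  exact hT huT hvT ht hs hts

section Mono
variable {n : ℕ} (Γ : Set ((Fin n → ℕ) × ℕ))
  (hΓ : ∀ x ∈ Γ, ∀ y ∈ Γ, x + y ∈ Γ)
  (Γk : ℕ → Set (Fin n → ℝ))
  (hΓk : ∀ k, Γk k = {x | ∃ α : Fin n → ℕ, (α, k) ∈ Γ ∧ x = fun i => (α i : ℝ)})

include hΓ hΓk in
lemma gamma_add (a b : ℕ) : Γk a + Γk b ⊆ Γk (a + b) := by
  rintro z ⟨p, hp, q, hq, rfl⟩
  rw [hΓk] at hp hq ⊢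
  obtain ⟨α, hα, rfl⟩ := hp
  obtain ⟨β, hβ, rfl⟩ := hq
  exact ⟨α + β, hΓ _ hα _ hβ, by funext i; simp⟩

include hΓ hΓk in
lemma smul_conv (k : ℕ) : ∀ m : ℕ, 1 ≤ m →
    ∀ y ∈ convexHull ℝ (Γk k), (m : ℝ) • y ∈ convexHull ℝ (Γk (m * k)) := by
  intro m hm
  induction m, hm using Nat.le_induction with
  | base => intro y hy; simpa using hy
  | succ m hm ih =>
    intro y hy
    have h2 : (m : ℝ) • y + y ∈ convexHull ℝ (Γk (m * k)) + convexHull ℝ (Γk k) :=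
      Set.add_mem_add (ih y hy) hy
    rw [← convexHull_add] at h2
    have h3 : (m : ℝ) • y + y ∈ convexHull ℝ (Γk (m * k + k)) :=
      convexHull_mono (gamma_add Γ hΓ Γk hΓk (m * k) k) h2
    have : (↑(m + 1) : ℝ) • y = (m : ℝ) • y + y := by push_cast; rw [add_smul, one_smul]
    rw [this]
    have he : (m + 1) * k = m * k + k := by ring
    rwa [he]

include hΓ hΓk in
lemma delta_mono (Δk : ℕ → Set (Fin n → ℝ))
    (hΔk : ∀ k, Δk k = (k : ℝ)⁻¹ • convexHull ℝ (Γk k))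
    (k m : ℕ) (hk : 1 ≤ k) (hm : 1 ≤ m) : Δk k ⊆ Δk (m * k) := by
  rw [hΔk, hΔk]
  rintro x ⟨y, hy, rfl⟩
  refine ⟨(m : ℝ) • y, smul_conv Γ hΓ Γk hΓk k m hm y hy, ?_⟩
  have hm0 : (m : ℝ) ≠ 0 := Nat.cast_ne_zero.mpr (by omega)
  have hk0 : (k : ℝ) ≠ 0 := Nat.cast_ne_zero.mpr (by omega)
  simp only []
  rw [smul_smul]
  push_cast
  rw [mul_inv]
  congr 1
  field_simp

end Mono

theorem stmt8 (n : ℕ) (Γ : Set ((Fin n → ℕ) × ℕ))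
    (hΓ : ∀ x ∈ Γ, ∀ y ∈ Γ, x + y ∈ Γ)
    (Γk : ℕ → Set (Fin n → ℝ))
    (hΓk : ∀ k, Γk k = {x | ∃ α : Fin n → ℕ, (α, k) ∈ Γ ∧ x = fun i => (α i : ℝ)})
    (Δk : ℕ → Set (Fin n → ℝ))
    (hΔk : ∀ k, Δk k = (k : ℝ)⁻¹ • convexHull ℝ (Γk k))
    (Δess : Set (Fin n → ℝ))
    (hΔess : Δess = ⋃ k ≥ 1, essInterior (Δk (Nat.factorial k))) :
    Convex ℝ Δess ∧
      IsOpen ((Subtype.val : Rplus n → (Fin n → ℝ)) ⁻¹' Δess) := by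
  subst hΔess
  have hfac : ∀ k l : ℕ, k ≤ l → Δk (Nat.factorial k) ⊆ Δk (Nat.factorial l) := by
    intro k l hkl
    have hdvd : Nat.factorial k ∣ Nat.factorial l := Nat.factorial_dvd_factorial hkl
    have hmul : (Nat.factorial l / Nat.factorial k) * Nat.factorial k = Nat.factorial l :=
      Nat.div_mul_cancel hdvd
    have hm1 : 1 ≤ Nat.factorial l / Nat.factorial k :=
      (Nat.one_le_div_iff (Nat.factorial_pos k)).mpr (Nat.factorial_le hkl)
    have := delta_mono Γ hΓ Γk hΓk Δk hΔk (Nat.factorial k)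
      (Nat.factorial l / Nat.factorial k) (Nat.factorial_pos k) hm1
    rwa [hmul] at this
  constructor
  · intro x hx y hy t s ht hs hts
    simp only [Set.mem_iUnion] at hx hy ⊢
    obtain ⟨k1, hk1, hx'⟩ := hx
    obtain ⟨k2, hk2, hy'⟩ := hy
    refine ⟨max k1 k2, le_trans hk1 (le_max_left _ _), ?_⟩
    have hconv : Convex ℝ (Δk (Nat.factorial (max k1 k2))) := by
      rw [hΔk]
      exact (convex_convexHull ℝ _).smul _
    exact (convex_essInterior hconv)
      (essInterior_mono (hfac k1 _ (le_max_left _ _)) hx')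
      (essInterior_mono (hfac k2 _ (le_max_right _ _)) hy') ht hs hts
  · simp only [Set.preimage_iUnion]
    refine isOpen_iUnion fun k => isOpen_iUnion fun _ => ?_
    rw [essInterior, Set.preimage_image_eq _ Subtype.val_injective]
    exact isOpen_interior
end

section
/- Let A ⊆ ℝⁿ be a finite set whose convex hull has nonempty interior in ℝⁿ. Then the function u_A : ℝⁿ → ℝ defined by u_A(x) := log(∑_{α∈A} e^{x·α}) is strictly convex on ℝⁿ. -/
open Real Finset

theorem stmt10 (n : ℕ) (A : Finset (Fin n → ℝ))
    (hA : (interior (convexHull ℝ (A : Set (Fin n → ℝ)))).Nonempty)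
    (u : (Fin n → ℝ) → ℝ)
    (hu : ∀ x, u x = Real.log (∑ α ∈ A, Real.exp (∑ i, x i * α i))) :
    StrictConvexOn ℝ Set.univ u := by
  have hAne : A.Nonempty := by
    rw [← Finset.coe_nonempty, ← convexHull_nonempty_iff (𝕜 := ℝ)]
    exact hA.mono interior_subset
  refine ⟨convex_univ, ?_⟩
  intro x _ y _ hxy a b ha hb hab
  set X : (Fin n → ℝ) → ℝ := fun α => ∑ i, x i * α i with hX
  set Y : (Fin n → ℝ) → ℝ := fun α => ∑ i, y i * α i with hY
  set Sx : ℝ := ∑ α ∈ A, Real.exp (X α) with hSx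
  set Sy : ℝ := ∑ α ∈ A, Real.exp (Y α) with hSy
  have hSxpos : 0 < Sx := Finset.sum_pos (fun α _ => Real.exp_pos _) hAne
  have hSypos : 0 < Sy := Finset.sum_pos (fun α _ => Real.exp_pos _) hAne
  by_cases hall : ∀ α ∈ A, X α - Real.log Sx = Y α - Real.log Sy
  · -- hyperplane contradiction
    exfalso
    set d : Fin n → ℝ := x - y with hd
    have hdne : d ≠ 0 := sub_ne_zero.mpr hxy
    obtain ⟨i0, hi0⟩ : ∃ i, d i ≠ 0 := by
      by_contra h; push_neg at h; exact hdne (funext h)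
    set c : ℝ := Real.log Sx - Real.log Sy with hc
    set l : (Fin n → ℝ) →L[ℝ] ℝ :=
      ∑ i, (d i) • ContinuousLinearMap.proj (R := ℝ) (φ := fun _ : Fin n => ℝ) i with hl
    have hlapp : ∀ z, l z = ∑ i, d i * z i := by
      intro z
      simp [hl, ContinuousLinearMap.sum_apply, ContinuousLinearMap.proj_apply]
    have hsubA : (A : Set (Fin n → ℝ)) ⊆ l ⁻¹' {c} := by
      intro α hα
      have h1 := hall α hα
      have h2 : X α - Y α = c := by rw [hc]; linarith
      have : l α = X α - Y α := by
        rw [hlapp, hX, hY]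
        simp only [hd, Pi.sub_apply, sub_mul]
        rw [Finset.sum_sub_distrib]
      simp [Set.mem_preimage, this, h2]
    have hsubH : convexHull ℝ (A : Set (Fin n → ℝ)) ⊆ l ⁻¹' {c} :=
      convexHull_min hsubA ((convex_singleton c).linear_preimage (l : (Fin n → ℝ) →ₗ[ℝ] ℝ))
    obtain ⟨z, hz⟩ := hA
    have hz' : z ∈ interior (l ⁻¹' {c}) := interior_mono hsubH hz
    have hsurj : Function.Surjective l := by
      intro r
      refine ⟨Pi.single i0 (r / d i0), ?_⟩
      have hsingle : l (Pi.single i0 (r / d i0)) = d i0 * (r / d i0) := by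
        rw [hlapp]
        rw [Finset.sum_eq_single i0]
        · simp
        · intro j _ hj; simp [Pi.single_apply, hj]
        · simp
      rw [hsingle]
      field_simp
    have hopen : IsOpen (l '' interior (l ⁻¹' {c})) :=
      (ContinuousLinearMap.isOpenMap l hsurj) _ isOpen_interior
    have hsub : l '' interior (l ⁻¹' {c}) ⊆ {c} :=
      Set.image_subset_iff.mpr interior_subset
    have hmem : l z ∈ l '' interior (l ⁻¹' {c}) := ⟨z, hz', rfl⟩
    have hlzc : l z = c := hsub hmem
    have heq : l '' interior (l ⁻¹' {c}) = {c} := by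
      apply Set.Subset.antisymm hsub
      rw [Set.singleton_subset_iff]
      exact hlzc ▸ hmem
    rw [heq] at hopen
    exact not_isOpen_singleton c hopen
  · push_neg at hall
    obtain ⟨α₀, hα₀mem, hα₀⟩ := hall
    -- per-term inequality from convexity of exp
    have hle : ∀ α ∈ A,
        Real.exp (a * (X α - Real.log Sx) + b * (Y α - Real.log Sy)) ≤
          a * Real.exp (X α - Real.log Sx) + b * Real.exp (Y α - Real.log Sy) := by
      intro α _
      have := convexOn_exp.2 (Set.mem_univ (X α - Real.log Sx))
        (Set.mem_univ (Y α - Real.log Sy)) ha.le hb.le hab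
      simpa [smul_eq_mul] using this
    have hlt0 : Real.exp (a * (X α₀ - Real.log Sx) + b * (Y α₀ - Real.log Sy)) <
          a * Real.exp (X α₀ - Real.log Sx) + b * Real.exp (Y α₀ - Real.log Sy) := by
      have := strictConvexOn_exp.2 (Set.mem_univ (X α₀ - Real.log Sx))
        (Set.mem_univ (Y α₀ - Real.log Sy)) hα₀ ha hb hab
      simpa [smul_eq_mul] using this
    have hsumlt : ∑ α ∈ A, Real.exp (a * (X α - Real.log Sx) + b * (Y α - Real.log Sy)) <
        ∑ α ∈ A, (a * Real.exp (X α - Real.log Sx) + b * Real.exp (Y α - Real.log Sy)) :=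
      Finset.sum_lt_sum hle ⟨α₀, hα₀mem, hlt0⟩
    have hsum1 : ∑ α ∈ A, (a * Real.exp (X α - Real.log Sx) + b * Real.exp (Y α - Real.log Sy)) = 1 := by
      rw [Finset.sum_add_distrib, ← Finset.mul_sum, ← Finset.mul_sum]
      simp only [Real.exp_sub, Real.exp_log hSxpos, Real.exp_log hSypos]
      rw [← Finset.sum_div, ← Finset.sum_div, ← hSx, ← hSy,
        div_self hSxpos.ne', div_self hSypos.ne']
      simpa using hab
    rw [hsum1] at hsumlt
    set C : ℝ := a * Real.log Sx + b * Real.log Sy with hC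
    have hexp : ∀ α : Fin n → ℝ,
        a * (X α - Real.log Sx) + b * (Y α - Real.log Sy) = (a * X α + b * Y α) - C := by
      intro α; rw [hC]; ring
    have hkey : ∑ α ∈ A, Real.exp (a * X α + b * Y α) < Real.exp C := by
      have hE : ∑ α ∈ A, Real.exp (a * (X α - Real.log Sx) + b * (Y α - Real.log Sy))
          = ∑ α ∈ A, Real.exp ((a * X α + b * Y α) - C) :=
        Finset.sum_congr rfl (fun α _ => by rw [hexp α])
      have : ∑ α ∈ A, Real.exp ((a * X α + b * Y α) - C) < 1 := by
        rw [← hE]; exact hsumlt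
      calc ∑ α ∈ A, Real.exp (a * X α + b * Y α)
          = Real.exp C * ∑ α ∈ A, Real.exp ((a * X α + b * Y α) - C) := by
            rw [Finset.mul_sum]
            refine Finset.sum_congr rfl (fun α _ => ?_)
            rw [Real.exp_sub]; field_simp
        _ < Real.exp C * 1 := by
            exact mul_lt_mul_of_pos_left this (Real.exp_pos C)
        _ = Real.exp C := mul_one _
    have hIP : ∀ α : Fin n → ℝ, (∑ i, (a • x + b • y) i * α i) = a * X α + b * Y α := by
      intro α
      rw [hX, hY, Finset.mul_sum, Finset.mul_sum, ← Finset.sum_add_distrib]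
      refine Finset.sum_congr rfl (fun i _ => ?_)
      simp [Pi.add_apply, Pi.smul_apply, smul_eq_mul]; ring
    rw [hu, hu, hu]
    have hrw : ∑ α ∈ A, Real.exp (∑ i, (a • x + b • y) i * α i)
        = ∑ α ∈ A, Real.exp (a * X α + b * Y α) :=
      Finset.sum_congr rfl (fun α _ => by rw [hIP α])
    rw [hrw]
    have hpos : 0 < ∑ α ∈ A, Real.exp (a * X α + b * Y α) :=
      Finset.sum_pos (fun α _ => Real.exp_pos _) hAne
    calc Real.log (∑ α ∈ A, Real.exp (a * X α + b * Y α))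
        < Real.log (Real.exp C) := Real.log_lt_log hpos hkey
      _ = C := Real.log_exp C
      _ = a * Real.log Sx + b * Real.log Sy := rfl
      _ = a • Real.log Sx + b • Real.log Sy := by simp [smul_eq_mul]
end

section
/- Let A ⊆ ℝⁿ be a finite set whose convex hull Conv(A) has nonempty interior in ℝⁿ. Define μ_A : ℝⁿ → ℝⁿ by μ_A(x) := (∑_{α∈A} e^{x·α} α) / (∑_{α∈A} e^{x·α}) (this is the gradient of the function u_A(x) = log ∑_{α∈A} e^{x·α}). Then the image μ_A(ℝⁿ) equals the interior of Conv(A). -/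
open Finset

noncomputable def dlin (n : ℕ) (α : Fin n → ℝ) : (Fin n → ℝ) →L[ℝ] ℝ :=
  LinearMap.toContinuousLinearMap
    { toFun := fun x => ∑ i, x i * α i
      map_add' := by intro x y; simp [add_mul, Finset.sum_add_distrib]
      map_smul' := by intro c x; simp [Finset.mul_sum, mul_assoc] }

lemma dlin_apply (n : ℕ) (α x : Fin n → ℝ) : dlin n α x = ∑ i, x i * α i := rfl

lemma dlin_single (n : ℕ) (α : Fin n → ℝ) (i : Fin n) :
    dlin n α (Pi.single i 1) = α i := by
  rw [dlin_apply]
  simp [Pi.single_apply, ite_mul]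

lemma key1 (n : ℕ) (A : Finset (Fin n → ℝ))
    (hA : (interior (convexHull ℝ (A : Set (Fin n → ℝ)))).Nonempty)
    (w : (Fin n → ℝ) → ℝ) (hw : ∀ α ∈ A, 0 < w α) (hsum : ∑ α ∈ A, w α = 1) :
    ∑ α ∈ A, w α • α ∈ interior (convexHull ℝ (A : Set (Fin n → ℝ))) := by
  obtain ⟨b, hb⟩ := hA
  have hbA : b ∈ convexHull ℝ (A : Set (Fin n → ℝ)) := interior_subset hb
  rw [Finset.convexHull_eq] at hbA
  obtain ⟨v, hv0, hv1, hvc⟩ := hbA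
  have hne : A.Nonempty := by
    rcases A.eq_empty_or_nonempty with h | h
    · simp [h] at hsum
    · exact h
  have hb_eq : b = ∑ α ∈ A, v α • α := by
    rw [← hvc, Finset.centerMass_eq_of_sum_1 _ _ hv1]; rfl
  set m := A.inf' hne w with hm_def
  have hm : 0 < m := (Finset.lt_inf'_iff hne).2 fun α hα => hw α hα
  set ε := m / 2 with hε_def
  have hεpos : 0 < ε := by positivity
  have hmle1 : m ≤ 1 := by
    obtain ⟨α₀, hα₀⟩ := hne
    calc m ≤ w α₀ := Finset.inf'_le _ hα₀
    _ ≤ ∑ α ∈ A, w α := Finset.single_le_sum (fun α hα => (hw α hα).le) hα₀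
    _ = 1 := hsum
  have hε1 : ε < 1 := by linarith
  have h1ε : (0:ℝ) < 1 - ε := by linarith
  have hvle1 : ∀ α ∈ A, v α ≤ 1 := fun α hα => by
    calc v α ≤ ∑ β ∈ A, v β := Finset.single_le_sum hv0 hα
    _ = 1 := hv1
  set w' : (Fin n → ℝ) → ℝ := fun α => (w α - ε * v α) / (1 - ε) with hw'_def
  have hw'0 : ∀ α ∈ A, 0 ≤ w' α := by
    intro α hα
    have h1 : m ≤ w α := Finset.inf'_le _ hα
    have h2 : ε * v α ≤ ε * 1 := by
      exact mul_le_mul_of_nonneg_left (hvle1 α hα) hεpos.le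
    have : 0 ≤ w α - ε * v α := by nlinarith
    positivity
  have hw'sum : ∑ α ∈ A, w' α = 1 := by
    simp only [hw'_def, div_eq_mul_inv, ← Finset.sum_mul]
    rw [Finset.sum_sub_distrib, ← Finset.mul_sum, hsum, hv1]
    field_simp
  set p' := ∑ α ∈ A, w' α • α with hp'_def
  have hp' : p' ∈ convexHull ℝ (A : Set (Fin n → ℝ)) := by
    have := Finset.centerMass_mem_convexHull A hw'0 (by rw [hw'sum]; norm_num)
      (fun α hα => Finset.mem_coe.2 hα)
    rwa [Finset.centerMass_eq_of_sum_1 _ _ hw'sum] at this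
  have hcombo : ε • b + (1 - ε) • p' = ∑ α ∈ A, w α • α := by
    rw [hb_eq, hp'_def, Finset.smul_sum, Finset.smul_sum, ← Finset.sum_add_distrib]
    refine Finset.sum_congr rfl fun α hα => ?_
    rw [smul_smul, smul_smul, ← add_smul]
    congr 1
    rw [hw'_def]
    field_simp
    ring
  rw [← hcombo]
  exact (convex_convexHull ℝ _).combo_interior_self_mem_interior hb hp' hεpos h1ε.le
    (by ring)




-- sup' bound: linear functional on convex hull bounded by max over A
lemma hull_le_sup (n : ℕ) (A : Finset (Fin n → ℝ)) (hne : A.Nonempty)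
    (ℓ : (Fin n → ℝ) →L[ℝ] ℝ) {z : Fin n → ℝ}
    (hz : z ∈ convexHull ℝ (A : Set (Fin n → ℝ))) :
    ℓ z ≤ A.sup' hne (fun α => ℓ α) := by
  have hsub : convexHull ℝ (A : Set (Fin n → ℝ)) ⊆
      {w | ℓ w ≤ A.sup' hne (fun α => ℓ α)} := by
    apply convexHull_min
    · intro α hα
      exact Finset.le_sup' (fun α => ℓ α) (Finset.mem_coe.1 hα)
    · exact convex_halfSpace_le ⟨ℓ.map_add, fun c x => ℓ.map_smul c x⟩ _
  exact hsub hz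

-- norm attained
lemma normAttained11 (n : ℕ) (x : Fin n → ℝ) (hx : x ≠ 0) :
    ∃ i, ‖x‖ = |x i| := by
  have hnn : Nonempty (Fin n) := by
    by_contra h
    exact hx (funext fun i => absurd ⟨i⟩ h)
  have hn : (Finset.univ : Finset (Fin n)).Nonempty := Finset.univ_nonempty
  obtain ⟨i, _, hi⟩ := Finset.exists_mem_eq_sup Finset.univ hn (fun i => ‖x i‖₊)
  refine ⟨i, ?_⟩
  have : ‖x‖₊ = ‖x i‖₊ := by rw [Pi.nnnorm_def]; exact hi
  calc ‖x‖ = (‖x‖₊ : ℝ) := rfl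
  _ = (‖x i‖₊ : ℝ) := by rw [this]
  _ = |x i| := by simp [Real.norm_eq_abs]

lemma sep (n : ℕ) (A : Finset (Fin n → ℝ)) (hne : A.Nonempty) {y : Fin n → ℝ}
    (hy : y ∈ interior (convexHull ℝ (A : Set (Fin n → ℝ)))) :
    ∃ c > 0, ∀ x : Fin n → ℝ, ∃ α ∈ A,
      dlin n x y + c * ‖x‖ ≤ dlin n x α := by
  obtain ⟨ε, hεpos, hball⟩ := Metric.isOpen_iff.1 isOpen_interior y hy
  refine ⟨ε / 2, by positivity, fun x => ?_⟩
  rcases eq_or_ne x 0 with rfl | hx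
  · obtain ⟨α, hα⟩ := hne
    exact ⟨α, hα, by simp [dlin_apply]⟩
  · have hxn : 0 < ‖x‖ := norm_pos_iff.2 hx
    set z := y + (ε / 2 / ‖x‖) • x with hz_def
    have hz : z ∈ convexHull ℝ (A : Set (Fin n → ℝ)) := by
      apply interior_subset
      apply hball
      rw [Metric.mem_ball, dist_eq_norm]
      have : z - y = (ε / 2 / ‖x‖) • x := by rw [hz_def]; abel
      rw [this, norm_smul]
      have : ‖(ε / 2 / ‖x‖ : ℝ)‖ = ε / 2 / ‖x‖ := by
        rw [Real.norm_eq_abs, abs_of_pos]; positivity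
      rw [this, div_mul_cancel₀ _ hxn.ne']
      linarith
    obtain ⟨i, hi⟩ := normAttained11 n x hx
    have hxx : ‖x‖ * ‖x‖ ≤ dlin n x x := by
      rw [dlin_apply]
      calc ‖x‖ * ‖x‖ = x i * x i := by rw [hi, abs_mul_abs_self]
      _ ≤ ∑ j, x j * x j := Finset.single_le_sum (f := fun j => x j * x j)
            (fun j _ => mul_self_nonneg _) (Finset.mem_univ i)
    have hℓz : dlin n x y + ε / 2 * ‖x‖ ≤ dlin n x z := by
      rw [hz_def, map_add, map_smul]
      have : ε / 2 * ‖x‖ ≤ (ε / 2 / ‖x‖) * dlin n x x := by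
        have h3 : (ε / 2 / ‖x‖) * (‖x‖ * ‖x‖) ≤ (ε / 2 / ‖x‖) * dlin n x x :=
          mul_le_mul_of_nonneg_left hxx (by positivity)
        have h4 : (ε / 2 / ‖x‖) * (‖x‖ * ‖x‖) = ε / 2 * ‖x‖ := by
          field_simp
        linarith
      simpa [smul_eq_mul] using add_le_add_left this (dlin n x y)
    have hsup := hull_le_sup n A hne (dlin n x) hz
    obtain ⟨α, hαA, hα⟩ := Finset.exists_mem_eq_sup' hne (fun α => dlin n x α)
    rw [hα] at hsup
    exact ⟨α, hαA, by linarith⟩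

lemma dlin_comm (n : ℕ) (a b : Fin n → ℝ) : dlin n a b = dlin n b a := by
  simp [dlin_apply, mul_comm]

theorem stmt11 (n : ℕ) (A : Finset (Fin n → ℝ))
    (hA : (interior (convexHull ℝ (A : Set (Fin n → ℝ)))).Nonempty)
    (μ : (Fin n → ℝ) → (Fin n → ℝ))
    (hμ : ∀ x, μ x = (∑ α ∈ A, Real.exp (∑ i, x i * α i))⁻¹ •
        ∑ α ∈ A, Real.exp (∑ i, x i * α i) • α) :
    Set.range μ = interior (convexHull ℝ (A : Set (Fin n → ℝ))) := by
  classical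
  have hne : A.Nonempty := by
    rcases A.eq_empty_or_nonempty with h | h
    · rw [h] at hA; simp at hA
    · exact h
  set S : (Fin n → ℝ) → ℝ := fun x => ∑ α ∈ A, Real.exp (dlin n α x) with hS_def
  have hSpos : ∀ x, 0 < S x := fun x =>
    Finset.sum_pos (fun α _ => Real.exp_pos _) hne
  apply Set.Subset.antisymm
  · rintro _ ⟨x, rfl⟩
    rw [hμ x]
    have heq : (∑ α ∈ A, Real.exp (∑ i, x i * α i))⁻¹ •
        ∑ α ∈ A, Real.exp (∑ i, x i * α i) • α
        = ∑ α ∈ A, ((S x)⁻¹ * Real.exp (dlin n α x)) • α := by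
      rw [Finset.smul_sum]
      exact Finset.sum_congr rfl fun α hα => by rw [smul_smul]; rfl
    rw [heq]
    exact key1 n A hA _
      (fun α hα => mul_pos (inv_pos.2 (hSpos x)) (Real.exp_pos _))
      (by rw [← Finset.mul_sum]; exact inv_mul_cancel₀ (hSpos x).ne')
  · intro y hy
    obtain ⟨c, hc, hsep⟩ := sep n A hne hy
    set g : (Fin n → ℝ) → ℝ := fun x => Real.log (S x) - dlin n y x with hg_def
    have hScont : Continuous S :=
      continuous_finset_sum _ fun α _ => Real.continuous_exp.comp (dlin n α).continuous
    have hgc : Continuous g :=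
      (hScont.log fun x => (hSpos x).ne').sub (dlin n y).continuous
    have hlb : ∀ x, c * ‖x‖ ≤ g x := by
      intro x
      obtain ⟨α, hαA, hα⟩ := hsep x
      have h1 : Real.exp (dlin n α x) ≤ S x :=
        Finset.single_le_sum (f := fun β => Real.exp (dlin n β x))
          (fun β _ => (Real.exp_pos _).le) hαA
      have h2 : dlin n α x ≤ Real.log (S x) := by
        rw [← Real.log_exp (dlin n α x)]
        exact Real.log_le_log (Real.exp_pos _) h1
      rw [dlin_comm n x y, dlin_comm n x α] at hα
      simp only [hg_def]
      linarith
    have hcoer : Filter.Tendsto g (Filter.cocompact _) Filter.atTop :=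
      Filter.tendsto_atTop_mono hlb
        (Filter.Tendsto.const_mul_atTop hc tendsto_norm_cocompact_atTop)
    obtain ⟨x₀, hx₀⟩ := hgc.exists_forall_le hcoer
    have hder : HasFDerivAt g
        ((S x₀)⁻¹ • ∑ α ∈ A, Real.exp (dlin n α x₀) • dlin n α - dlin n y) x₀ := by
      have h1 : HasFDerivAt S (∑ α ∈ A, Real.exp (dlin n α x₀) • dlin n α) x₀ :=
        HasFDerivAt.fun_sum fun α _ => (dlin n α).hasFDerivAt.exp
      exact (h1.log (hSpos x₀).ne').sub (dlin n y).hasFDerivAt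
    have hmin : IsLocalMin g x₀ := Filter.Eventually.of_forall hx₀
    have h0 : fderiv ℝ g x₀ = 0 := hmin.fderiv_eq_zero
    rw [hder.fderiv] at h0
    refine ⟨x₀, ?_⟩
    rw [hμ x₀]
    funext i
    have h1 := ContinuousLinearMap.ext_iff.1 h0 (Pi.single i 1)
    simp only [ContinuousLinearMap.sub_apply, ContinuousLinearMap.smul_apply,
      ContinuousLinearMap.coe_sum', Finset.sum_apply, dlin_single,
      ContinuousLinearMap.zero_apply, smul_eq_mul] at h1
    have h2 : (S x₀)⁻¹ * (∑ α ∈ A, Real.exp (dlin n α x₀) * α i) = y i := by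
      linarith
    simp only [Pi.smul_apply, Finset.sum_apply, smul_eq_mul]
    rw [← h2]
    rfl
end

section
/- Let u : ℝⁿ → ℝ be a twice continuously differentiable strictly convex function and let V ⊆ ℝⁿ be an open set. Then ∫_V det(Hess u)(x) dx equals the Lebesgue measure of the image ∇u(V) of V under the gradient map ∇u, where (Hess u)(x) is the Hessian matrix (∂²u/∂xᵢ∂xⱼ)(x) and the integral is with respect to Lebesgue measure on ℝⁿ. -/
open MeasureTheory Matrix

/-- The gradient of `u : ℝⁿ → ℝ` with respect to the standard inner product. -/
noncomputable def grad {n : ℕ} (u : (Fin n → ℝ) → ℝ) (x : Fin n → ℝ) : Fin n → ℝ :=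
  fun i => fderiv ℝ u x (Pi.single i 1)

/-- The Hessian matrix of second partial derivatives of `u : ℝⁿ → ℝ`. -/
noncomputable def hessian {n : ℕ} (u : (Fin n → ℝ) → ℝ) (x : Fin n → ℝ) :
    Matrix (Fin n) (Fin n) ℝ :=
  Matrix.of fun i j => fderiv ℝ (fun y => fderiv ℝ u y (Pi.single j 1)) x (Pi.single i 1)

private lemma deriv_nonneg_of_monotone' {h : ℝ → ℝ} (hm : Monotone h) {c : ℝ}
    (hd : HasDerivAt h c 0) : 0 ≤ c := by
  have h1 : Filter.Tendsto (slope h 0) (nhdsWithin 0 (Set.Ioi 0)) (nhds c) :=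
    (hasDerivAt_iff_tendsto_slope.mp hd).mono_left
      (nhdsWithin_mono 0 (fun t ht => Set.mem_compl_singleton_iff.mpr (ne_of_gt ht)))
  refine ge_of_tendsto h1 ?_
  filter_upwards [self_mem_nhdsWithin] with t ht
  rw [slope_def_field]
  have := hm (le_of_lt ht)
  have ht' : (0:ℝ) < t - 0 := by simpa using ht
  exact div_nonneg (by linarith) ht'.le

private lemma psd_det_nonneg {m : ℕ} {M : Matrix (Fin m) (Fin m) ℝ} (h : M.PosSemidef) :
    0 ≤ M.det := by
  rw [h.1.det_eq_prod_eigenvalues]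
  exact Finset.prod_nonneg fun i _ => by simpa using h.eigenvalues_nonneg i

private lemma line_hasDerivAt {n : ℕ} (x v : Fin n → ℝ) (t : ℝ) :
    HasDerivAt (fun s : ℝ => x + s • v) v t := by
  simpa using ((hasDerivAt_id t).smul_const v).const_add x

private lemma comp_line_hasDerivAt {n : ℕ} {u : (Fin n → ℝ) → ℝ} (hu : Differentiable ℝ u)
    (x v : Fin n → ℝ) (t : ℝ) :
    HasDerivAt (fun s : ℝ => u (x + s • v)) (fderiv ℝ u (x + t • v) v) t := by
  exact (hu (x + t • v)).hasFDerivAt.comp_hasDerivAt t (line_hasDerivAt x v t)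

/-- strict monotonicity of the gradient of a strictly convex function -/
private lemma grad_strict_mono {n : ℕ} {u : (Fin n → ℝ) → ℝ} (hu : Differentiable ℝ u)
    (hconv : StrictConvexOn ℝ Set.univ u) {x y : Fin n → ℝ} (hxy : x ≠ y) :
    fderiv ℝ u x (y - x) < fderiv ℝ u y (y - x) := by
  set v := y - x with hv
  have hvne : v ≠ 0 := sub_ne_zero.mpr (Ne.symm hxy)
  set g : ℝ → ℝ := fun t => u (x + t • v) with hg
  have hgsc : StrictConvexOn ℝ Set.univ g := by
    refine ⟨convex_univ, ?_⟩
    intro a _ b _ hab ta tb hta htb htab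
    have hpts : x + a • v ≠ x + b • v := by
      intro h
      apply hab
      have := add_left_cancel h
      have h2 : (a - b) • v = 0 := by rw [sub_smul, this, sub_self]
      rcases smul_eq_zero.mp h2 with h3 | h3
      · linarith [sub_eq_zero.mp (by exact_mod_cast h3)]
      · exact absurd h3 hvne
    have key := hconv.2 (Set.mem_univ (x + a • v)) (Set.mem_univ (x + b • v)) hpts hta htb htab
    have hpt : ta • (x + a • v) + tb • (x + b • v) = x + (ta * a + tb * b) • v := by
      have : ta • (x + a • v) + tb • (x + b • v)
          = (ta + tb) • x + (ta * a + tb * b) • v := by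
        rw [smul_add, smul_add, smul_smul, smul_smul, add_smul, add_smul]; abel
      rw [this, htab, one_smul]
    have h' : g (ta • a + tb • b) = u (ta • (x + a • v) + tb • (x + b • v)) := by
      rw [hpt]; simp [hg, smul_eq_mul]
    rw [h']; exact key
  have hgd : ∀ t : ℝ, HasDerivAt g (fderiv ℝ u (x + t • v) v) t :=
    fun t => comp_line_hasDerivAt hu x v t
  have hmono : StrictMonoOn (deriv g) Set.univ :=
    hgsc.strictMonoOn_deriv (fun t _ => (hgd t).differentiableAt)
  have h01 := hmono (Set.mem_univ (0:ℝ)) (Set.mem_univ (1:ℝ)) one_pos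
  rw [(hgd 0).deriv, (hgd 1).deriv] at h01
  simpa [hv] using h01

theorem stmt12 (n : ℕ) (u : (Fin n → ℝ) → ℝ)
    (hu : ContDiff ℝ 2 u) (hconv : StrictConvexOn ℝ Set.univ u)
    (V : Set (Fin n → ℝ)) (hV : IsOpen V) :
    ∫⁻ x in V, ENNReal.ofReal ((hessian u x).det) ∂volume
      = volume (grad u '' V) := by
  classical
  have hud : Differentiable ℝ u := hu.differentiable (by norm_num)
  have hfd : ContDiff ℝ 1 (fderiv ℝ u) := hu.fderiv_right (by norm_num)
  set f'' : (Fin n → ℝ) → ((Fin n → ℝ) →L[ℝ] ((Fin n → ℝ) →L[ℝ] ℝ)) :=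
    fun x => fderiv ℝ (fderiv ℝ u) x with hf''
  have hderiv2 : ∀ x, HasFDerivAt (fderiv ℝ u) (f'' x) x :=
    fun x => (hfd.differentiable one_ne_zero x).hasFDerivAt
  set Φ : ((Fin n → ℝ) →L[ℝ] ℝ) →L[ℝ] (Fin n → ℝ) :=
    ContinuousLinearMap.pi (fun i => ContinuousLinearMap.apply ℝ ℝ (Pi.single i 1)) with hΦ
  set A : (Fin n → ℝ) → ((Fin n → ℝ) →L[ℝ] (Fin n → ℝ)) :=
    fun x => Φ.comp (f'' x) with hA'
  have hA : ∀ x, HasFDerivAt (grad u) (A x) x := by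
    intro x
    exact Φ.hasFDerivAt.comp x (hderiv2 x)
  have hHess : ∀ x i j, hessian u x i j = f'' x (Pi.single i 1) (Pi.single j 1) := by
    intro x i j
    have h : HasFDerivAt (fun y => fderiv ℝ u y (Pi.single j 1))
        ((ContinuousLinearMap.apply ℝ ℝ (Pi.single j 1)).comp (f'' x)) x := by
      exact (ContinuousLinearMap.apply ℝ ℝ (Pi.single j 1)).hasFDerivAt.comp x (hderiv2 x)
    simp only [hessian, Matrix.of_apply, h.fderiv, ContinuousLinearMap.comp_apply,
      ContinuousLinearMap.apply_apply]
  have hsymm : ∀ x v w, f'' x v w = f'' x w v :=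
    fun x => second_derivative_symmetric (fun y => (hud y).hasFDerivAt) (hderiv2 x)
  have hvsum : ∀ v : Fin n → ℝ, v = ∑ i, v i • (Pi.single i 1 : Fin n → ℝ) := by
    intro v; funext j
    simp [Pi.single_apply, Finset.sum_apply]
  have hquad : ∀ (x : Fin n → ℝ) (v : Fin n → ℝ),
      dotProduct v (Matrix.mulVec (hessian u x) v) = f'' x v v := by
    intro x v
    have h1 : f'' x v v = ∑ i, ∑ j, v i * (v j * f'' x (Pi.single i 1) (Pi.single j 1)) := by
      conv_lhs => rw [hvsum v]
      simp only [map_sum, _root_.map_smul, ContinuousLinearMap.sum_apply,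
        ContinuousLinearMap.smul_apply, ContinuousLinearMap.coe_sum', Finset.sum_apply,
        ContinuousLinearMap.coe_smul', Pi.smul_apply, smul_eq_mul, Finset.mul_sum]
      exact Finset.sum_congr rfl fun i _ => Finset.sum_congr rfl fun j _ => by rw [hsymm]
    rw [h1]
    simp only [dotProduct, Matrix.mulVec, Finset.mul_sum]
    refine Finset.sum_congr rfl fun i _ => Finset.sum_congr rfl fun j _ => ?_
    rw [hHess]
    ring
  have hnn : ∀ (x v : Fin n → ℝ), 0 ≤ f'' x v v := by
    intro x v
    set g : ℝ → ℝ := fun t => fderiv ℝ u (x + t • v) v with hg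
    have gmono : Monotone g := by
      intro s t hst
      rcases eq_or_lt_of_le hst with rfl | hst'
      · exact le_rfl
      by_cases hv : v = 0
      · simp [hg, hv]
      have hpq : x + s • v ≠ x + t • v := by
        intro h
        have h2 := add_left_cancel h
        have h3 : (s - t) • v = 0 := by rw [sub_smul, h2, sub_self]
        rcases smul_eq_zero.mp h3 with h4 | h4
        · exact absurd (by linarith [sub_eq_zero.mp h4]) (ne_of_lt hst')
        · exact absurd h4 hv
      have hlt := grad_strict_mono hud hconv hpq
      have hd : (x + t • v) - (x + s • v) = (t - s) • v := by
        rw [sub_smul]; abel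
      rw [hd, _root_.map_smul, _root_.map_smul, smul_eq_mul, smul_eq_mul] at hlt
      have := (mul_lt_mul_iff_right₀ (by linarith : (0:ℝ) < t - s)).mp hlt
      exact this.le
    have h1 : HasDerivAt (fun t : ℝ => fderiv ℝ u (x + t • v)) (f'' x v) 0 := by
      have h := (hderiv2 (x + (0:ℝ) • v)).comp_hasDerivAt 0 (line_hasDerivAt x v 0)
      simp only [zero_smul, add_zero] at h
      exact h
    have h2 : HasDerivAt g (f'' x v v) 0 := by
      exact (ContinuousLinearMap.apply ℝ ℝ v).hasFDerivAt.comp_hasDerivAt 0 h1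
    exact deriv_nonneg_of_monotone' gmono h2
  have hpsd : ∀ x, (hessian u x).PosSemidef := by
    intro x
    refine Matrix.PosSemidef.of_dotProduct_mulVec_nonneg ?_ ?_
    · ext i j
      simp only [Matrix.conjTranspose_apply, star_trivial]
      rw [hHess, hHess, hsymm]
    · intro v
      simpa [hquad x v] using hnn x v
  have hrep : ∀ z w, fderiv ℝ u z w = ∑ i, w i * grad u z i := by
    intro z w
    conv_lhs => rw [hvsum w]
    simp [map_sum, _root_.map_smul, grad, smul_eq_mul]
  have hinj : Set.InjOn (grad u) V := by
    intro x _ y _ h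
    by_contra hne
    have hlt := grad_strict_mono hud hconv hne
    rw [hrep x, hrep y, h] at hlt
    exact lt_irrefl _ hlt
  have hdet : ∀ x, (A x).det = (hessian u x).det := by
    intro x
    have hmat : LinearMap.toMatrix' ((A x) : (Fin n → ℝ) →ₗ[ℝ] (Fin n → ℝ))
        = (hessian u x)ᵀ := by
      ext i j
      rw [LinearMap.toMatrix'_apply]
      have hsing : (fun j' => if j' = j then (1:ℝ) else 0) = Pi.single j 1 := by
        funext j'; simp [Pi.single_apply]
      show A x (Pi.single j 1) i = (hessian u x)ᵀ i j
      rw [Matrix.transpose_apply, hHess]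
      simp [hA', hΦ]
    have : (A x).det = LinearMap.det ((A x) : (Fin n → ℝ) →ₗ[ℝ] (Fin n → ℝ)) := rfl
    rw [this, ← LinearMap.det_toMatrix', hmat, Matrix.det_transpose]
  rw [← lintegral_abs_det_fderiv_eq_addHaar_image volume hV.measurableSet
    (fun x _ => (hA x).hasFDerivWithinAt) hinj]
  exact lintegral_congr fun x => by rw [hdet x, abs_of_nonneg (psd_det_nonneg (hpsd x))]
end

section
/- Let p ∈ ℂ[z₁,…,zₙ] be a polynomial, let α be an exponent in the support of p with coefficient c ≠ 0, and let γ ∈ ℕⁿ satisfy γ·α < γ·β for every exponent β ≠ α in the support of p. Then for every compact set K ⊆ ℂⁿ, the functions z ↦ τ^{−γ·α} p(τ^{γ₁}z₁, …, τ^{γₙ}zₙ) converge uniformly on K to z ↦ c z^α as the nonzero complex parameter τ tends to 0. -/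
open MvPolynomial Finset

theorem stmt13 (n : ℕ) (p : MvPolynomial (Fin n) ℂ) (α : Fin n →₀ ℕ)
    (c : ℂ) (hc : MvPolynomial.coeff α p = c) (hc0 : c ≠ 0)
    (γ : Fin n → ℕ)
    (hγ : ∀ β ∈ p.support, β ≠ α → ∑ i, γ i * α i < ∑ i, γ i * β i)
    (K : Set (Fin n → ℂ)) (hK : IsCompact K) :
    TendstoUniformlyOn
      (fun (τ : ℂ) (z : Fin n → ℂ) =>
        τ ^ (-((∑ i, γ i * α i : ℕ) : ℤ)) *
          MvPolynomial.eval (fun i => τ ^ (γ i) * z i) p)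
      (fun z => c * ∏ i, z i ^ α i)
      (nhdsWithin (0 : ℂ) {0}ᶜ) K := by
  classical
  set m : ℕ := ∑ i, γ i * α i with hm
  have hα : α ∈ p.support := by
    rw [MvPolynomial.mem_support_iff, hc]; exact hc0
  obtain ⟨R, hR⟩ := hK.isBounded.subset_closedBall 0
  set M : ℝ := max R 1 with hMdef
  have hM0 : (0:ℝ) ≤ M := le_trans zero_le_one (le_max_right _ _)
  have hMz : ∀ z ∈ K, ∀ i, ‖z i‖ ≤ M := by
    intro z hz i
    have h1 := hR hz
    simp only [Metric.mem_closedBall, dist_zero_right] at h1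
    exact le_trans (norm_le_pi_norm z i) (le_trans h1 (le_max_left _ _))
  set C : ℝ := ∑ β ∈ p.support.erase α, ‖p.coeff β‖ * M ^ (∑ i, β i) with hCdef
  have hC0 : 0 ≤ C :=
    Finset.sum_nonneg fun β _ => mul_nonneg (norm_nonneg _) (pow_nonneg hM0 _)
  -- key algebraic identity
  have key : ∀ τ : ℂ, τ ≠ 0 → ∀ z : Fin n → ℂ,
      τ ^ (-(m:ℤ)) * MvPolynomial.eval (fun i => τ ^ (γ i) * z i) p
        - c * ∏ i, z i ^ α i
      = ∑ β ∈ p.support.erase α,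
          p.coeff β * τ ^ (∑ i, γ i * β i - m) * ∏ i, z i ^ β i := by
    intro τ hτ z
    have hev : MvPolynomial.eval (fun i => τ ^ (γ i) * z i) p
        = ∑ β ∈ p.support, p.coeff β * (τ ^ (∑ i, γ i * β i) * ∏ i, z i ^ β i) := by
      rw [MvPolynomial.eval_eq']
      refine Finset.sum_congr rfl fun β _ => ?_
      congr 1
      simp_rw [mul_pow, ← pow_mul]
      rw [Finset.prod_mul_distrib, Finset.prod_pow_eq_pow_sum]
    have hterm : ∀ β ∈ p.support,
        τ ^ (-(m:ℤ)) * (p.coeff β * (τ ^ (∑ i, γ i * β i) * ∏ i, z i ^ β i))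
        = p.coeff β * τ ^ (∑ i, γ i * β i - m) * ∏ i, z i ^ β i := by
      intro β hβ
      have hle : m ≤ ∑ i, γ i * β i := by
        by_cases hβα : β = α
        · subst hβα; exact le_refl _
        · exact le_of_lt (hγ β hβ hβα)
      have hz : τ ^ (-(m:ℤ)) * τ ^ (∑ i, γ i * β i)
          = τ ^ (∑ i, γ i * β i - m) := by
        rw [← zpow_natCast τ (∑ i, γ i * β i), ← zpow_add₀ hτ,
          ← zpow_natCast τ (∑ i, γ i * β i - m)]
        congr 1
        omega
      calc τ ^ (-(m:ℤ)) * (p.coeff β * (τ ^ (∑ i, γ i * β i) * ∏ i, z i ^ β i))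
          = p.coeff β * (τ ^ (-(m:ℤ)) * τ ^ (∑ i, γ i * β i)) * ∏ i, z i ^ β i := by
            ring
        _ = _ := by rw [hz]
    rw [hev, Finset.mul_sum, Finset.sum_congr rfl hterm,
      ← Finset.add_sum_erase _ _ hα]
    have : p.coeff α * τ ^ (∑ i, γ i * α i - m) * ∏ i, z i ^ α i
        = c * ∏ i, z i ^ α i := by
      rw [hc, hm, Nat.sub_self, pow_zero, mul_one]
    rw [this]; ring
  -- the bound
  have bound : ∀ τ : ℂ, τ ≠ 0 → ‖τ‖ ≤ 1 → ∀ z ∈ K,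
      ‖τ ^ (-(m:ℤ)) * MvPolynomial.eval (fun i => τ ^ (γ i) * z i) p
        - c * ∏ i, z i ^ α i‖ ≤ ‖τ‖ * C := by
    intro τ hτ hτ1 z hz
    rw [key τ hτ z]
    calc ‖∑ β ∈ p.support.erase α,
            p.coeff β * τ ^ (∑ i, γ i * β i - m) * ∏ i, z i ^ β i‖
        ≤ ∑ β ∈ p.support.erase α,
            ‖p.coeff β * τ ^ (∑ i, γ i * β i - m) * ∏ i, z i ^ β i‖ :=
          norm_sum_le _ _
      _ ≤ ∑ β ∈ p.support.erase α, ‖p.coeff β‖ * ‖τ‖ * M ^ (∑ i, β i) := by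
          refine Finset.sum_le_sum fun β hβ => ?_
          rw [norm_mul, norm_mul, norm_pow]
          have hβs := Finset.mem_of_mem_erase hβ
          have hβα := Finset.ne_of_mem_erase hβ
          have hd : 1 ≤ ∑ i, γ i * β i - m := by
            have := hγ β hβs hβα; omega
          have h1 : ‖τ‖ ^ (∑ i, γ i * β i - m) ≤ ‖τ‖ :=
            (pow_le_pow_of_le_one (norm_nonneg _) hτ1 hd).trans_eq (pow_one _)
          have h2 : ‖∏ i, z i ^ β i‖ ≤ M ^ (∑ i, β i) := by
            rw [norm_prod, ← Finset.prod_pow_eq_pow_sum]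
            refine Finset.prod_le_prod (fun i _ => norm_nonneg _) fun i _ => ?_
            rw [norm_pow]
            exact pow_le_pow_left₀ (norm_nonneg _) (hMz z hz i) _
          exact mul_le_mul (mul_le_mul_of_nonneg_left h1 (norm_nonneg _)) h2
            (norm_nonneg _) (mul_nonneg (norm_nonneg _) (norm_nonneg _))
      _ = ‖τ‖ * C := by
          rw [hCdef, Finset.mul_sum]
          refine Finset.sum_congr rfl fun β _ => ?_; ring
  -- conclude
  rw [Metric.tendstoUniformlyOn_iff]
  intro ε hε
  have hδ : 0 < min 1 (ε / (C + 1)) :=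
    lt_min one_pos (div_pos hε (by linarith))
  have hev : ∀ᶠ τ : ℂ in nhdsWithin 0 {0}ᶜ, ‖τ‖ < min 1 (ε / (C + 1)) ∧ τ ≠ 0 := by
    filter_upwards [eventually_nhdsWithin_of_eventually_nhds
      (Metric.eventually_nhds_iff.mpr ⟨min 1 (ε / (C + 1)), hδ,
        fun {y} hy => by rwa [dist_zero_right] at hy⟩),
      self_mem_nhdsWithin] with τ h1 h2
    exact ⟨h1, h2⟩
  filter_upwards [hev] with τ ⟨hτδ, hτ0⟩ z hz
  rw [dist_eq_norm]
  have hb := bound τ hτ0 (le_of_lt (lt_of_lt_of_le hτδ (min_le_left _ _))) z hz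
  rw [← norm_neg]
  have : -(c * ∏ i, z i ^ α i -
      τ ^ (-(m:ℤ)) * MvPolynomial.eval (fun i => τ ^ (γ i) * z i) p)
      = τ ^ (-(m:ℤ)) * MvPolynomial.eval (fun i => τ ^ (γ i) * z i) p
        - c * ∏ i, z i ^ α i := by ring
  rw [this]
  calc ‖_‖ ≤ ‖τ‖ * C := hb
    _ ≤ ‖τ‖ * (C + 1) := by
        have := norm_nonneg τ; nlinarith
    _ < (ε / (C + 1)) * (C + 1) := by
        have h := lt_of_lt_of_le hτδ (min_le_right _ _)
        exact mul_lt_mul_of_pos_right h (by linarith)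
    _ = ε := by field_simp
end
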